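/- arXiv:2205.12077 — 4 statements merged into one kernel-verified Lean document; each statement's English description precedes it below -/
import Mathlib

section
/- For every fixed τ > 0 and every choice of parameters δ > 0, ρ > 0, P > 0, λ ≥ 0, the function β ↦ D(β,τ) is strictly concave on (0, ∞). -/
open MeasureTheory ProbabilityTheory Filter Real Set NNReal ENNReal

noncomputable section

/-- Standard Gaussian `N(0,1)` measure on `ℝ`. -/
def stdGaussian : Measure ℝ := ProbabilityTheory.gaussianReal 0 1

/-- `Yfun P lam β τ = (β/α)·(E[(H − √P·α)²·1{H ≥ √P·α}] − 1/2)` with `α = 1/τ + 2λ/β`. -/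
def Yfun (P lam β τ : ℝ) : ℝ :=
  (β / (1 / τ + 2 * lam / β)) *
    ((∫ h in Set.Ici (Real.sqrt P * (1 / τ + 2 * lam / β)),
        (h - Real.sqrt P * (1 / τ + 2 * lam / β)) ^ 2 ∂stdGaussian) - 1 / 2)

/-- `D(β,τ) = τβδ/2 + ρβ/(2τ) − β²/4 + Y(β,τ)`, with the convention `D(0,τ) = 0`. -/
def Dfun (δ ρ P lam β τ : ℝ) : ℝ :=
  if β = 0 then 0
  else τ * β * δ / 2 + ρ * β / (2 * τ) - β ^ 2 / 4 + Yfun P lam β τ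

/-- `(βs, τs)` is a saddle point of `max_{β ≥ 0} min_{τ > 0} D(β, τ)`:
`D(β,τs) ≤ D(βs,τs) ≤ D(βs,τ)` for all `β ≥ 0` and `τ > 0`. -/
def IsSaddle (δ ρ P lam βs τs : ℝ) : Prop :=
  0 ≤ βs ∧ 0 < τs ∧
  (∀ β, 0 ≤ β → Dfun δ ρ P lam β τs ≤ Dfun δ ρ P lam βs τs) ∧
  (∀ τ, 0 < τ → Dfun δ ρ P lam βs τs ≤ Dfun δ ρ P lam βs τ)

end

section Auxiliary

noncomputable section AuxG

/-- standard normal pdf -/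
def phi (x : ℝ) : ℝ := (Real.sqrt (2*Real.pi))⁻¹ * Real.exp (-(x^2/2))

/-- upper tail of standard normal -/
def Qf (a : ℝ) : ℝ := ∫ x in Set.Ioi a, phi x

lemma phi_pos (x : ℝ) : 0 < phi x := by
  have h : (0:ℝ) < Real.sqrt (2*Real.pi) := Real.sqrt_pos.mpr (by positivity)
  unfold phi
  positivity

lemma continuous_phi : Continuous phi := by
  unfold phi; fun_prop

lemma hasDerivAt_phi (x : ℝ) : HasDerivAt phi (-x * phi x) x := by
  have h1 : HasDerivAt (fun x : ℝ => -(x^2/2)) (-x) x := by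
    have := ((hasDerivAt_pow 2 x).div_const 2).neg
    simp at this
    convert this using 1
    all_goals try rfl
  have h2 := (h1.exp).const_mul ((Real.sqrt (2*Real.pi))⁻¹)
  convert h2 using 1
  all_goals try rfl
  unfold phi; ring

lemma integrable_phi : Integrable phi := by
  have h := integrable_exp_neg_mul_sq (b := (1/2 : ℝ)) (by norm_num)
  have h' : Integrable (fun x : ℝ => Real.exp (-(x^2/2))) := by
    refine h.congr ?_
    filter_upwards with x
    congr 1; ring
  exact h'.const_mul _

lemma integrable_sq_mul_phi (a : ℝ) : Integrable (fun x : ℝ => (x-a)^2 * phi x) := by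
  have h2 : Integrable (fun x : ℝ => x^2 * Real.exp (-(x^2/2))) := by
    have h := integrable_rpow_mul_exp_neg_mul_sq (b := (1/2:ℝ)) (by norm_num) (s := 2) (by norm_num)
    refine h.congr ?_
    filter_upwards with x
    rw [show (2:ℝ) = ((2:ℕ):ℝ) by norm_num, Real.rpow_natCast]
    congr 1; ring
  have h1 : Integrable (fun x : ℝ => x * Real.exp (-(x^2/2))) := by
    have h := integrable_mul_exp_neg_mul_sq (b := (1/2:ℝ)) (by norm_num)
    refine h.congr ?_
    filter_upwards with x
    congr 1; ring
  have h0 : Integrable (fun x : ℝ => Real.exp (-(x^2/2))) := by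
    have h := integrable_exp_neg_mul_sq (b := (1/2:ℝ)) (by norm_num)
    refine h.congr ?_
    filter_upwards with x
    congr 1; ring
  have := (((h2.const_mul ((Real.sqrt (2*Real.pi))⁻¹)).sub
      (h1.const_mul (2*a*(Real.sqrt (2*Real.pi))⁻¹))).add
      (h0.const_mul (a^2*(Real.sqrt (2*Real.pi))⁻¹)))
  refine this.congr ?_
  filter_upwards with x
  simp only [Pi.add_apply, Pi.sub_apply]
  unfold phi; ring

lemma Q_split {a b : ℝ} (hab : a ≤ b) : Qf a = (∫ x in Set.Ioc a b, phi x) + Qf b := by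
  unfold Qf
  rw [← Set.Ioc_union_Ioi_eq_Ioi hab,
    setIntegral_union (Set.Ioc_disjoint_Ioi le_rfl) measurableSet_Ioi
      integrable_phi.integrableOn integrable_phi.integrableOn]

lemma Q_repr (t : ℝ) : Qf t = Qf 0 - ∫ x in (0:ℝ)..t, phi x := by
  rcases le_total 0 t with h | h
  · rw [intervalIntegral.integral_of_le h, Q_split h]
    ring
  · rw [intervalIntegral.integral_symm, intervalIntegral.integral_of_le h, Q_split h]
    ring

lemma hasDerivAt_Q (a : ℝ) : HasDerivAt Qf (-phi a) a := by
  have h : HasDerivAt (fun t : ℝ => Qf 0 - ∫ x in (0:ℝ)..t, phi x) (-phi a) a := by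
    have h1 : HasDerivAt (fun t : ℝ => ∫ x in (0:ℝ)..t, phi x) (phi a) a :=
      intervalIntegral.integral_hasDerivAt_right integrable_phi.intervalIntegrable
        continuous_phi.stronglyMeasurable.stronglyMeasurableAtFilter
        continuous_phi.continuousAt
    simpa using (h1.const_sub (Qf 0))
  exact h.congr_of_eventuallyEq (Filter.Eventually.of_forall fun t => Q_repr t)

lemma continuous_Q : Continuous Qf :=
  continuous_iff_continuousAt.mpr fun a => (hasDerivAt_Q a).continuousAt

lemma Q_tendsto : Tendsto Qf atTop (nhds 0) := by
  have h1 : Tendsto (fun t : ℝ => ∫ x in (0:ℝ)..t, phi x) atTop (nhds (Qf 0)) :=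
    intervalIntegral_tendsto_integral_Ioi 0 integrable_phi.integrableOn tendsto_id
  have h2 : Tendsto (fun t : ℝ => Qf 0 - ∫ x in (0:ℝ)..t, phi x) atTop (nhds (Qf 0 - Qf 0)) :=
    tendsto_const_nhds.sub h1
  simpa using h2.congr fun t => (Q_repr t).symm

lemma integral_phi_total : ∫ x, phi x = 1 := by
  have h : ∫ x : ℝ, Real.exp (-(1/2 : ℝ) * x^2) = Real.sqrt (Real.pi / (1/2)) :=
    integral_gaussian (1/2)
  have h2 : ∫ x : ℝ, Real.exp (-(x^2/2)) = Real.sqrt (2*Real.pi) := by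
    rw [show (2*Real.pi) = Real.pi / (1/2) by ring, ← h]
    congr 1; funext x; congr 1; ring
  unfold phi
  rw [MeasureTheory.integral_const_mul, h2]
  have : Real.sqrt (2*Real.pi) ≠ 0 := ne_of_gt (Real.sqrt_pos.mpr (by positivity))
  field_simp

lemma Q_zero : Qf 0 = 1/2 := by
  have heven : ∀ x : ℝ, phi (-x) = phi x := by
    intro x; unfold phi; rw [neg_sq]
  have hsymm : Qf 0 = ∫ x in Set.Iic (0:ℝ), phi x := by
    unfold Qf
    calc ∫ x in Set.Ioi (0:ℝ), phi x = ∫ x in Set.Ioi (0:ℝ), phi (-x) := by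
          simp_rw [heven]
      _ = ∫ x in Set.Iic (-(0:ℝ)), phi x := integral_comp_neg_Ioi 0 phi
      _ = ∫ x in Set.Iic (0:ℝ), phi x := by norm_num
  have hsplit : (∫ x in Set.Iic (0:ℝ), phi x) + (∫ x in Set.Ioi (0:ℝ), phi x) = ∫ x, phi x :=
    intervalIntegral.integral_Iic_add_Ioi integrable_phi.integrableOn integrable_phi.integrableOn
  rw [integral_phi_total] at hsplit
  have h5 : Qf 0 + Qf 0 = 1 := by
    nth_rewrite 1 [hsymm]
    exact hsplit
  linarith

lemma phi_tendsto : Tendsto phi atTop (nhds 0) := by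
  have h1 : Tendsto (fun x : ℝ => -(x^2/2)) atTop atBot := by
    have := (tendsto_pow_atTop (n := 2) two_ne_zero).atTop_div_const (by norm_num : (0:ℝ) < 2)
    exact tendsto_neg_atTop_atBot.comp this
  have h2 : Tendsto (fun x : ℝ => Real.exp (-(x^2/2))) atTop (nhds 0) :=
    Real.tendsto_exp_atBot.comp h1
  have h3 := h2.const_mul ((Real.sqrt (2*Real.pi))⁻¹)
  rw [mul_zero] at h3
  exact h3

lemma mul_phi_tendsto : Tendsto (fun x => x * phi x) atTop (nhds 0) := by
  have hlo := rpow_mul_exp_neg_mul_sq_isLittleO_exp_neg (b := (1/2:ℝ)) (by norm_num) 1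
  have hexp : Tendsto (fun x : ℝ => Real.exp (-(1/2:ℝ) * x)) atTop (nhds 0) := by
    have hlin : Tendsto (fun x : ℝ => -(1/2:ℝ) * x) atTop atBot := by
      have := (tendsto_id (α := ℝ)).const_mul_atTop (by norm_num : (0:ℝ) < 1/2)
      have h4 := tendsto_neg_atTop_atBot.comp this
      refine h4.congr fun x => ?_
      simp [neg_mul]
    exact Real.tendsto_exp_atBot.comp hlin
  have h1 : Tendsto (fun x : ℝ => x ^ (1:ℝ) * Real.exp (-(1/2:ℝ) * x^2)) atTop (nhds 0) :=
    hlo.isBigO.trans_tendsto hexp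
  have h2 : Tendsto (fun x : ℝ => x * Real.exp (-(x^2/2))) atTop (nhds 0) := by
    refine h1.congr fun x => ?_
    rw [Real.rpow_one]; congr 1; ring
  have h3 := h2.const_mul ((Real.sqrt (2*Real.pi))⁻¹)
  rw [mul_zero] at h3
  refine h3.congr fun x => ?_
  unfold phi; ring

lemma integral_sq_phi (a : ℝ) :
    ∫ x in Set.Ioi a, (x-a)^2 * phi x = (1+a^2) * Qf a - a * phi a := by
  have hderiv : ∀ x ∈ Set.Ici a,
      HasDerivAt (fun h => (2*a - h) * phi h - (1+a^2) * Qf h) ((x-a)^2 * phi x) x := by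
    intro x _
    have h := ((hasDerivAt_const x (2*a)).sub (hasDerivAt_id x)).mul (hasDerivAt_phi x)
      |>.sub ((hasDerivAt_Q x).const_mul (1+a^2))
    convert h using 1
    all_goals try rfl
    simp only [Pi.sub_apply, id_eq]
    ring
  have htend : Tendsto (fun h => (2*a - h) * phi h - (1+a^2) * Qf h) atTop (nhds 0) := by
    have h := ((phi_tendsto.const_mul (2*a)).sub mul_phi_tendsto).sub (Q_tendsto.const_mul (1+a^2))
    simp only [mul_zero, sub_zero, zero_sub, neg_zero, sub_self] at h
    refine h.congr fun x => ?_
    ring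
  have := integral_Ioi_of_hasDerivAt_of_tendsto' hderiv (integrable_sq_mul_phi a).integrableOn htend
  rw [this]; ring

def Nf (s x : ℝ) : ℝ := (1 + (s*x)^2) * Qf (s*x) - s*x*phi (s*x) - 1/2
def N1 (s x : ℝ) : ℝ := 2*s*(s*x*Qf (s*x) - phi (s*x))
def Gf (s x : ℝ) : ℝ := Nf s x / x
def G1 (s x : ℝ) : ℝ := (N1 s x * x - Nf s x) / x^2
def Kf (t : ℝ) : ℝ := 2*Qf t + 2*t*phi t - 1

lemma hasDerivAt_M (y : ℝ) :
    HasDerivAt (fun y => (1 + y^2) * Qf y - y*phi y - 1/2) (2*y*Qf y - 2*phi y) y := by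
  have h := ((((hasDerivAt_pow 2 y).const_add 1).mul (hasDerivAt_Q y)).sub
    ((hasDerivAt_id y).mul (hasDerivAt_phi y))).sub_const (1/2)
  convert h using 1
  all_goals try rfl
  simp only [id_eq, Nat.cast_ofNat, pow_one]
  ring

lemma hasDerivAt_Nf (s x : ℝ) : HasDerivAt (Nf s) (N1 s x) x := by
  have h := (hasDerivAt_M (s*x)).comp x ((hasDerivAt_id x).const_mul s)
  convert h using 1
  all_goals try rfl
  unfold N1; ring

lemma hasDerivAt_M1 (y : ℝ) :
    HasDerivAt (fun y => 2*(y*Qf y - phi y)) (2*Qf y) y := by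
  have h := (((hasDerivAt_id y).mul (hasDerivAt_Q y)).sub (hasDerivAt_phi y)).const_mul 2
  convert h using 1
  all_goals try rfl
  try simp only [id_eq]
  ring

lemma hasDerivAt_N1 (s x : ℝ) : HasDerivAt (N1 s) (2*s^2*Qf (s*x)) x := by
  have h := ((hasDerivAt_M1 (s*x)).comp x ((hasDerivAt_id x).const_mul s)).const_mul s
  convert h using 1
  all_goals try rfl
  · funext y; simp only [Function.comp_apply]
    unfold N1; ring
  · try simp only [id_eq]
    ring

lemma hasDerivAt_Gf (s : ℝ) {x : ℝ} (hx : x ≠ 0) : HasDerivAt (Gf s) (G1 s x) x := by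
  have h := (hasDerivAt_Nf s x).div (hasDerivAt_id x) hx
  convert h using 1
  all_goals try rfl
  unfold G1
  try simp only [id_eq]
  ring

lemma hasDerivAt_G1 (s : ℝ) {x : ℝ} (hx : x ≠ 0) :
    HasDerivAt (G1 s) (Kf (s*x) / x^3) x := by
  have hnum : HasDerivAt (fun x => N1 s x * x - Nf s x) (2*s^2*Qf (s*x) * x) x := by
    have h := ((hasDerivAt_N1 s x).mul (hasDerivAt_id x)).sub (hasDerivAt_Nf s x)
    convert h using 1
    all_goals try rfl
    try simp only [id_eq]
    ring
  have h := hnum.div (hasDerivAt_pow 2 x) (pow_ne_zero 2 hx)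
  convert h using 1
  all_goals try rfl
  unfold Kf N1 Nf
  simp only [Nat.cast_ofNat, pow_one]
  field_simp
  ring

lemma Kf_neg {t : ℝ} (ht : 0 < t) : Kf t < 0 := by
  have hderiv : ∀ u : ℝ, HasDerivAt Kf (-2*u^2*phi u) u := by
    intro u
    have h := (((hasDerivAt_Q u).const_mul 2).add
      (((hasDerivAt_id u).mul (hasDerivAt_phi u)).const_mul 2)).sub_const 1
    convert h using 1
    all_goals try rfl
    · funext y; unfold Kf; simp only [Pi.add_apply, Pi.mul_apply, id_eq]; ring
    · simp only [id_eq]; ring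
  have hanti : StrictAntiOn Kf (Set.Ici 0) := by
    refine strictAntiOn_of_deriv_neg (convex_Ici 0) ?_ ?_
    · exact fun u _ => (hderiv u).continuousAt.continuousWithinAt
    · intro u hu
      rw [interior_Ici] at hu
      rw [(hderiv u).deriv]
      have h1 : 0 < u := hu
      have h2 : 0 < u^2 * phi u := mul_pos (pow_pos h1 2) (phi_pos u)
      linarith
  have h0 : Kf 0 = 0 := by
    unfold Kf; rw [Q_zero]; ring
  have := hanti (Set.self_mem_Ici) (Set.mem_Ici.mpr ht.le) ht
  linarith

end AuxG

section Bridge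

lemma pdfReal_eq_phi (x : ℝ) : ProbabilityTheory.gaussianPDFReal 0 1 x = phi x := by
  unfold ProbabilityTheory.gaussianPDFReal phi
  push_cast
  norm_num
  left; ring

lemma stdGaussian_sq_integral (a : ℝ) :
    (∫ h in Set.Ici a, (h - a)^2 ∂stdGaussian) = (1+a^2) * Qf a - a * phi a := by
  have h1 : _root_.stdGaussian = volume.withDensity
      (fun x => ((Real.toNNReal (ProbabilityTheory.gaussianPDFReal 0 1 x) : ℝ≥0) : ℝ≥0∞)) := by
    rw [_root_.stdGaussian, ProbabilityTheory.gaussianReal_of_var_ne_zero 0 one_ne_zero]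
    rfl
  rw [h1, setIntegral_withDensity_eq_setIntegral_smul
    (ProbabilityTheory.measurable_gaussianPDFReal 0 1).real_toNNReal _ measurableSet_Ici]
  have h2 : ∀ x : ℝ, (Real.toNNReal (ProbabilityTheory.gaussianPDFReal 0 1 x) : ℝ≥0) • ((x - a)^2)
      = (x-a)^2 * phi x := by
    intro x
    rw [NNReal.smul_def, smul_eq_mul,
      Real.coe_toNNReal _ (ProbabilityTheory.gaussianPDFReal_nonneg 0 1 x), pdfReal_eq_phi]
    ring
  simp_rw [h2]
  rw [MeasureTheory.integral_Ici_eq_integral_Ioi]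
  exact integral_sq_phi a
end Bridge

noncomputable section Main

lemma Yfun_eq (P lam β τ : ℝ) :
    Yfun P lam β τ = β * Gf (Real.sqrt P) (1/τ + 2*lam/β) := by
  unfold Yfun Gf Nf
  rw [stdGaussian_sq_integral, div_mul_eq_mul_div, mul_div_assoc]

/-- the explicit form of `Dfun` on positive β -/
def auxg0 (δ ρ s lam τ β : ℝ) : ℝ :=
  τ*β*δ/2 + ρ*β/(2*τ) - β^2/4 + β * Gf s (1/τ + 2*lam/β)

/-- first derivative -/
def auxg1 (δ ρ s lam τ β : ℝ) : ℝ :=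
  τ*δ/2 + ρ/(2*τ) - β/2 + Gf s (1/τ+2*lam/β) - (2*lam/β) * G1 s (1/τ+2*lam/β)

/-- second derivative -/
def auxg2 (s lam τ β : ℝ) : ℝ :=
  -(1/2:ℝ) + ((2*lam)^2/β^3) * (Kf (s*(1/τ+2*lam/β)) / (1/τ+2*lam/β)^3)

lemma hasDerivAt_alpha (lam τ : ℝ) {β : ℝ} (hβ : β ≠ 0) :
    HasDerivAt (fun β : ℝ => 1/τ + 2*lam/β) (-(2*lam)/β^2) β := by
  have h := ((hasDerivAt_inv hβ).const_mul (2*lam)).const_add (1/τ)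
  have he : (fun β : ℝ => 1/τ + 2*lam/β) = fun β : ℝ => 1/τ + 2*lam*β⁻¹ := by
    funext y; simp only [div_eq_mul_inv]
  rw [he]
  convert h using 1
  all_goals try rfl
  field_simp

lemma hasDerivAt_auxg0 (δ ρ s lam τ : ℝ) {β : ℝ} (hβ : 0 < β)
    (hα : 1/τ + 2*lam/β ≠ 0) :
    HasDerivAt (auxg0 δ ρ s lam τ) (auxg1 δ ρ s lam τ β) β := by
  have hcomp : HasDerivAt (fun β : ℝ => Gf s (1/τ+2*lam/β))
      (G1 s (1/τ+2*lam/β) * (-(2*lam)/β^2)) β :=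
    by have := (hasDerivAt_Gf s hα).comp β (hasDerivAt_alpha lam τ hβ.ne'); exact this
  have hpoly : HasDerivAt (fun β : ℝ => τ*β*δ/2 + ρ*β/(2*τ) - β^2/4)
      (τ*δ/2 + ρ/(2*τ) - β/2) β := by
    have h := (((((hasDerivAt_id β).const_mul τ).mul_const δ).div_const 2).add
      (((hasDerivAt_id β).const_mul ρ).div_const (2*τ))).sub ((hasDerivAt_pow 2 β).div_const 4)
    convert h using 1
    all_goals try rfl
    simp only [id_eq, Nat.cast_ofNat, pow_one]
    ring
  have hprod : HasDerivAt (fun β : ℝ => β * Gf s (1/τ+2*lam/β))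
      (1 * Gf s (1/τ+2*lam/β) + β * (G1 s (1/τ+2*lam/β) * (-(2*lam)/β^2))) β :=
    (hasDerivAt_id β).mul hcomp
  have h := hpoly.add hprod
  have hgoal : auxg1 δ ρ s lam τ β =
      τ*δ/2 + ρ/(2*τ) - β/2 + (1 * Gf s (1/τ+2*lam/β)
        + β * (G1 s (1/τ+2*lam/β) * (-(2*lam)/β^2))) := by
    unfold auxg1
    field_simp
    ring
  rw [show auxg0 δ ρ s lam τ = fun β => τ*β*δ/2 + ρ*β/(2*τ) - β^2/4
      + β * Gf s (1/τ + 2*lam/β) from rfl, hgoal]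
  exact h

lemma hasDerivAt_auxg1 (δ ρ s lam τ : ℝ) {β : ℝ} (hβ : 0 < β)
    (hα : (0:ℝ) < 1/τ + 2*lam/β) :
    HasDerivAt (auxg1 δ ρ s lam τ) (auxg2 s lam τ β) β := by
  have hαd := hasDerivAt_alpha lam τ hβ.ne'
  have hG : HasDerivAt (fun β : ℝ => Gf s (1/τ+2*lam/β))
      (G1 s (1/τ+2*lam/β) * (-(2*lam)/β^2)) β :=
    by have := (hasDerivAt_Gf s hα.ne').comp β hαd; exact this
  have hG1c : HasDerivAt (fun β : ℝ => G1 s (1/τ+2*lam/β))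
      ((Kf (s*(1/τ+2*lam/β)) / (1/τ+2*lam/β)^3) * (-(2*lam)/β^2)) β :=
    by have := (hasDerivAt_G1 s hα.ne').comp β hαd; exact this
  have hlin : HasDerivAt (fun β : ℝ => 2*lam/β) (-(2*lam)/β^2) β := by
    have h := (hasDerivAt_inv hβ.ne').const_mul (2*lam)
    have he : (fun β : ℝ => 2*lam/β) = fun β : ℝ => 2*lam*β⁻¹ := by
      funext y; rw [div_eq_mul_inv]
    rw [he]
    convert h using 1
    all_goals try rfl
    field_simp
  have hprod : HasDerivAt (fun β : ℝ => (2*lam/β) * G1 s (1/τ+2*lam/β))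
      ((-(2*lam)/β^2) * G1 s (1/τ+2*lam/β)
        + (2*lam/β) * ((Kf (s*(1/τ+2*lam/β)) / (1/τ+2*lam/β)^3) * (-(2*lam)/β^2))) β :=
    hlin.mul hG1c
  have hconst : HasDerivAt (fun β : ℝ => τ*δ/2 + ρ/(2*τ) - β/2)
      (-(1/2:ℝ)) β := by
    have h := ((hasDerivAt_id β).div_const 2).const_sub (τ*δ/2 + ρ/(2*τ))
    convert h using 1
    all_goals try rfl
  have h := (hconst.add hG).sub hprod
  have hgoal : auxg2 s lam τ β = (-(1/2:ℝ) + G1 s (1/τ+2*lam/β) * (-(2*lam)/β^2))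
      - ((-(2*lam)/β^2) * G1 s (1/τ+2*lam/β)
        + (2*lam/β) * ((Kf (s*(1/τ+2*lam/β)) / (1/τ+2*lam/β)^3) * (-(2*lam)/β^2))) := by
    unfold auxg2
    field_simp
    ring
  have hfun : auxg1 δ ρ s lam τ = fun β : ℝ =>
      (τ*δ/2 + ρ/(2*τ) - β/2 + Gf s (1/τ+2*lam/β)) - (2*lam/β) * G1 s (1/τ+2*lam/β) := by
    funext y; unfold auxg1; ring
  rw [hfun, hgoal]
  exact h


end Main

end Auxiliary

/-- for fixed `τ > 0` and parameters `δ, ρ, P > 0`, `λ ≥ 0`, the function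
`β ↦ D(β,τ)` is strictly concave on `(0,∞)`. -/
theorem strict_concavity_of_D (δ ρ P lam τ : ℝ)
    (hδ : 0 < δ) (hρ : 0 < ρ) (hP : 0 < P) (hlam : 0 ≤ lam) (hτ : 0 < τ) :
    StrictConcaveOn ℝ (Set.Ioi (0 : ℝ)) (fun β => Dfun δ ρ P lam β τ) := by
  have hs0 : 0 < Real.sqrt P := Real.sqrt_pos.mpr hP
  set s := Real.sqrt P with hs
  have hα : ∀ β : ℝ, 0 < β → 0 < 1/τ + 2*lam/β := by
    intro β hβ
    have h1 : 0 < 1/τ := by positivity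
    have h2 : 0 ≤ 2*lam/β := by positivity
    linarith
  have hDeq : ∀ y ∈ Set.Ioi (0:ℝ), Dfun δ ρ P lam y τ = auxg0 δ ρ s lam τ y := by
    intro y hy
    rw [Dfun, if_neg (ne_of_gt hy), Yfun_eq]
    unfold auxg0
    ring
  have hD' : ∀ y ∈ Set.Ioi (0:ℝ),
      HasDerivAt (fun b => Dfun δ ρ P lam b τ) (auxg1 δ ρ s lam τ y) y := by
    intro y hy
    refine (hasDerivAt_auxg0 δ ρ s lam τ hy (hα y hy).ne').congr_of_eventuallyEq ?_
    filter_upwards [isOpen_Ioi.eventually_mem hy] with z hz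
    exact hDeq z hz
  have hcont : ContinuousOn (fun b => Dfun δ ρ P lam b τ) (Set.Ioi 0) :=
    fun y hy => (hD' y hy).continuousAt.continuousWithinAt
  refine strictConcaveOn_of_deriv2_neg (convex_Ioi 0) hcont ?_
  intro x hx
  rw [interior_Ioi] at hx
  have heq2 : deriv (fun b => Dfun δ ρ P lam b τ) =ᶠ[nhds x] auxg1 δ ρ s lam τ := by
    filter_upwards [isOpen_Ioi.eventually_mem hx] with y hy
    exact (hD' y hy).deriv
  have hit : deriv^[2] (fun b => Dfun δ ρ P lam b τ) x
      = deriv (deriv (fun b => Dfun δ ρ P lam b τ)) x := rfl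
  rw [hit, heq2.deriv_eq, (hasDerivAt_auxg1 δ ρ s lam τ hx (hα x hx)).deriv]
  have hK := Kf_neg (mul_pos hs0 (hα x hx))
  have hx0 : (0:ℝ) < x := hx
  have h5 : Kf (s*(1/τ+2*lam/x)) / (1/τ+2*lam/x)^3 ≤ 0 :=
    div_nonpos_of_nonpos_of_nonneg hK.le (pow_nonneg (hα x hx).le 3)
  have h4 : (0:ℝ) ≤ (2*lam)^2/x^3 := div_nonneg (sq_nonneg _) (pow_pos hx0 3).le
  have h6 : ((2*lam)^2/x^3) * (Kf (s*(1/τ+2*lam/x)) / (1/τ+2*lam/x)^3) ≤ 0 :=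
    mul_nonpos_of_nonneg_of_nonpos h4 h5
  unfold auxg2
  linarith
end

section
/- Assume either λ > 0, or λ = 0 and δ > 1, and let (β*, τ*) be the unique saddle point of max_{β ≥ 0} min_{τ > 0} D(β,τ); set α* = 1/τ* + 2λ/β*. Then the first-order optimality condition (τ*)²·δ − ρ = 2P·Pr[H ≥ √P·α*] + (1/(α*)²)·E[H²·1{−√P·α* ≤ H ≤ √P·α*}] holds, where H is a standard Gaussian N(0,1) random variable. -/
open MeasureTheory ProbabilityTheory Filter

open MeasureTheory ProbabilityTheory Filter Set
open scoped ENNReal NNReal Real Topology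

noncomputable section

namespace SaddleAux

def phi (x : ℝ) : ℝ := (Real.sqrt (2 * Real.pi))⁻¹ * Real.exp (-(1/2) * x ^ 2)

lemma phi_eq : gaussianPDFReal 0 1 = phi := by
  funext x
  rw [gaussianPDFReal]
  simp only [NNReal.coe_one, mul_one, sub_zero]
  rw [phi]
  ring_nf

lemma continuous_phi : Continuous phi :=
  continuous_const.mul ((continuous_const.mul (continuous_pow 2)).rexp)

lemma phi_nonneg (x : ℝ) : 0 ≤ phi x := by
  rw [← phi_eq]; exact gaussianPDFReal_nonneg 0 1 x

lemma phi_neg (x : ℝ) : phi (-x) = phi x := by simp [phi]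

lemma stdGaussian_eq :
    _root_.stdGaussian = volume.withDensity fun x => ((phi x).toNNReal : ℝ≥0∞) := by
  rw [_root_.stdGaussian, gaussianReal_of_var_ne_zero 0 one_ne_zero]
  congr 1
  funext x
  rw [gaussianPDF, phi_eq, ENNReal.ofReal]

lemma setIntegral_stdGaussian (f : ℝ → ℝ) {s : Set ℝ} (hs : MeasurableSet s) :
    ∫ x in s, f x ∂stdGaussian = ∫ x in s, phi x * f x := by
  rw [stdGaussian_eq,
    setIntegral_withDensity_eq_setIntegral_smul
      (continuous_phi.measurable.real_toNNReal) f hs]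
  refine setIntegral_congr_fun hs fun x _ => ?_
  simp [NNReal.smul_def, Real.coe_toNNReal _ (phi_nonneg x)]

lemma integral_stdGaussian (f : ℝ → ℝ) :
    ∫ x, f x ∂stdGaussian = ∫ x, phi x * f x := by
  rw [stdGaussian_eq,
    integral_withDensity_eq_integral_smul (continuous_phi.measurable.real_toNNReal) f]
  refine integral_congr_ae (Eventually.of_forall fun x => ?_)
  simp [NNReal.smul_def, Real.coe_toNNReal _ (phi_nonneg x)]

lemma integrable_stdGaussian (f : ℝ → ℝ)
    (h : Integrable (fun x => phi x * f x)) : Integrable f stdGaussian := by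
  rw [stdGaussian_eq,
    integrable_withDensity_iff_integrable_smul continuous_phi.measurable.real_toNNReal]
  refine h.congr (Eventually.of_forall fun x => ?_)
  simp [NNReal.smul_def, Real.coe_toNNReal _ (phi_nonneg x)]


end SaddleAux

namespace SaddleAux

lemma integrable_gauss0 : Integrable (fun x : ℝ => Real.exp (-(1/2) * x^2)) := by
  simpa using integrable_exp_neg_mul_sq (show (0:ℝ) < 1/2 by norm_num)

lemma integrable_gauss1 : Integrable (fun x : ℝ => x * Real.exp (-(1/2) * x^2)) := by
  simpa using integrable_mul_exp_neg_mul_sq (show (0:ℝ) < 1/2 by norm_num)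

lemma sq_exp_le (x : ℝ) : x^2 * Real.exp (-(1/2)*x^2) ≤ 4 * Real.exp (-(1/4)*x^2) := by
  have h1 : (1/4 : ℝ) * x^2 + 1 ≤ Real.exp ((1/4) * x^2) := Real.add_one_le_exp _
  have h2 : Real.exp ((1/4)*x^2) * Real.exp (-(1/2)*x^2) = Real.exp (-(1/4)*x^2) := by
    rw [← Real.exp_add]; ring_nf
  nlinarith [Real.exp_pos (-(1/2)*x^2), Real.exp_pos ((1/4)*x^2), sq_nonneg x]

lemma integrable_gauss2 : Integrable (fun x : ℝ => x^2 * Real.exp (-(1/2) * x^2)) := by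
  apply Integrable.mono' ((integrable_exp_neg_mul_sq (show (0:ℝ) < 1/4 by norm_num)).const_mul 4)
  · exact ((continuous_pow 2).mul
      ((continuous_const.mul (continuous_pow 2)).rexp)).aestronglyMeasurable
  · refine Eventually.of_forall fun x => ?_
    rw [Real.norm_eq_abs, abs_of_nonneg (by positivity)]
    exact sq_exp_le x

lemma hasDerivAt_F (x : ℝ) :
    HasDerivAt (fun x : ℝ => -x * Real.exp (-(1/2) * x^2))
      ((x^2 - 1) * Real.exp (-(1/2) * x^2)) x := by
  have h1 : HasDerivAt (fun x : ℝ => -(1/2) * x^2) (-(1/2) * (2 * x^1)) x :=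
    (hasDerivAt_pow 2 x).const_mul _
  have h2 := h1.exp
  have h3 := (hasDerivAt_id x).neg.mul h2
  refine h3.congr_deriv ?_
  simp only [Pi.neg_apply, id_eq]
  ring

lemma tendsto_xexp_atTop :
    Tendsto (fun x : ℝ => x * Real.exp (-(1/2) * x^2)) atTop (𝓝 0) := by
  have h := rpow_mul_exp_neg_mul_sq_isLittleO_exp_neg (show (0:ℝ) < 1/2 by norm_num) 1
  have h2 : Tendsto (fun x : ℝ => Real.exp (-(1/2) * x)) atTop (𝓝 0) := by
    have ht : Tendsto (fun x : ℝ => -(1/2) * x) atTop atBot := by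
      have : Tendsto (fun x : ℝ => (1/2) * x) atTop atTop :=
        Tendsto.const_mul_atTop (by norm_num) tendsto_id
      have := tendsto_neg_atTop_atBot.comp this
      have he : (fun x : ℝ => -(1/2) * x) = (Neg.neg ∘ fun x : ℝ => (1/2) * x) := by
        funext x; simp [Function.comp]
      rw [he]; exact this
    exact Real.tendsto_exp_atBot.comp ht
  have h0 := h.trans_tendsto h2
  refine h0.congr fun x => ?_
  rw [Real.rpow_one]

lemma integral_sq_sub_one_exp :
    ∫ x : ℝ, (x^2 - 1) * Real.exp (-(1/2) * x^2) = 0 := by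
  set f' : ℝ → ℝ := fun x => (x^2 - 1) * Real.exp (-(1/2) * x^2) with hf'
  set F : ℝ → ℝ := fun x => -x * Real.exp (-(1/2) * x^2) with hF
  have hint : Integrable f' := by
    have := integrable_gauss2.sub integrable_gauss0
    refine this.congr (Eventually.of_forall fun x => ?_); simp [f']; ring
  have hcont : Continuous F := by
    exact (continuous_id.neg.mul ((continuous_const.mul (continuous_pow 2)).rexp))
  have htop : Tendsto F atTop (𝓝 0) := by
    have := tendsto_xexp_atTop.neg
    rw [neg_zero] at this
    refine this.congr fun x => by simp [F]
  have hbot : Tendsto F atBot (𝓝 0) := by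
    have := tendsto_xexp_atTop.comp tendsto_neg_atBot_atTop
    rw [show (0:ℝ) = -0 from (neg_zero).symm] at this ⊢
    refine this.congr fun x => ?_
    simp only [Function.comp_apply, F]
    ring_nf
  have hIic : ∫ x in Set.Iic (0:ℝ), f' x = F 0 - 0 :=
    integral_Iic_of_hasDerivAt_of_tendsto hcont.continuousWithinAt
      (fun x _ => hasDerivAt_F x) hint.integrableOn hbot
  have hIoi : ∫ x in Set.Ioi (0:ℝ), f' x = 0 - F 0 :=
    integral_Ioi_of_hasDerivAt_of_tendsto hcont.continuousWithinAt
      (fun x _ => hasDerivAt_F x) hint.integrableOn htop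
  have := intervalIntegral.integral_Iic_add_Ioi (b := (0:ℝ)) (f := f')
    hint.integrableOn hint.integrableOn
  rw [← this, hIic, hIoi]; ring

lemma integral_sq_exp :
    ∫ x : ℝ, x^2 * Real.exp (-(1/2) * x^2) = Real.sqrt (2 * Real.pi) := by
  have h := integral_sq_sub_one_exp
  have hsplit : ∀ x : ℝ, (x^2 - 1) * Real.exp (-(1/2) * x^2)
      = x^2 * Real.exp (-(1/2) * x^2) - Real.exp (-(1/2) * x^2) := fun x => by ring
  rw [integral_congr_ae (Eventually.of_forall hsplit),
    integral_sub integrable_gauss2 integrable_gauss0, sub_eq_zero] at h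
  rw [h]
  have := integral_gaussian (1/2 : ℝ)
  simpa only [show Real.pi / (1/2) = 2 * Real.pi by ring] using this

lemma integral_phi : ∫ x : ℝ, phi x = 1 := by
  rw [← phi_eq]; exact integral_gaussianPDFReal_eq_one 0 one_ne_zero

lemma sqrt_two_pi_pos : 0 < Real.sqrt (2 * Real.pi) :=
  Real.sqrt_pos.2 (by positivity)

lemma integrable_phi_mul (k : ℕ) (hk : k ≤ 2) :
    Integrable (fun x : ℝ => phi x * x ^ k) := by
  interval_cases k
  · simpa using (integrable_gauss0.const_mul (Real.sqrt (2*Real.pi))⁻¹).congr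
      (Eventually.of_forall fun x => by simp [phi])
  · exact (integrable_gauss1.const_mul (Real.sqrt (2*Real.pi))⁻¹).congr
      (Eventually.of_forall fun x => by simp [phi]; ring)
  · exact (integrable_gauss2.const_mul (Real.sqrt (2*Real.pi))⁻¹).congr
      (Eventually.of_forall fun x => by simp [phi]; ring)

lemma integral_phi_sq : ∫ x : ℝ, phi x * x ^ 2 = 1 := by
  have : (fun x : ℝ => phi x * x ^ 2)
      = fun x => (Real.sqrt (2*Real.pi))⁻¹ * (x^2 * Real.exp (-(1/2) * x^2)) := by
    funext x; simp [phi]; ring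
  rw [this, integral_const_mul, integral_sq_exp,
    inv_mul_cancel₀ sqrt_two_pi_pos.ne']


end SaddleAux

namespace SaddleAux

instance : NullSingletonClass stdGaussian := by
  refine ⟨fun a => ?_⟩
  rw [stdGaussian_eq, withDensity_apply _ (measurableSet_singleton a)]
  rw [Measure.restrict_singleton, Real.volume_singleton]
  simp

lemma integrable_pow_stdGaussian (k : ℕ) (hk : k ≤ 2) :
    Integrable (fun x : ℝ => x ^ k) stdGaussian :=
  integrable_stdGaussian _ (integrable_phi_mul k hk)

lemma integral_sq_stdGaussian : ∫ x, x ^ 2 ∂stdGaussian = 1 := by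
  rw [integral_stdGaussian]; exact integral_phi_sq

lemma sym_sq (c : ℝ) :
    ∫ x in Set.Iic (-c), x ^ 2 ∂stdGaussian = ∫ x in Set.Ici c, x ^ 2 ∂stdGaussian := by
  rw [setIntegral_stdGaussian _ measurableSet_Iic,
    setIntegral_stdGaussian _ measurableSet_Ici]
  have h := integral_comp_neg_Iic (-c) (fun x => phi x * x ^ 2)
  rw [neg_neg] at h
  have heven : ∀ x : ℝ, phi x * x ^ 2 = phi (-x) * (-x) ^ 2 := fun x => by
    rw [phi_neg]; ring
  calc ∫ x in Set.Iic (-c), phi x * x ^ 2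
      = ∫ x in Set.Iic (-c), phi (-x) * (-x) ^ 2 :=
        setIntegral_congr_fun measurableSet_Iic fun x _ => heven x
    _ = ∫ x in Set.Ioi c, phi x * x ^ 2 := h
    _ = ∫ x in Set.Ici c, phi x * x ^ 2 := MeasureTheory.integral_Ici_eq_integral_Ioi.symm

lemma split_sq {c : ℝ} (hc : 0 ≤ c) :
    ∫ x in Set.Icc (-c) c, x ^ 2 ∂stdGaussian
      = 1 - 2 * ∫ x in Set.Ici c, x ^ 2 ∂stdGaussian := by
  have hint : Integrable (fun x : ℝ => x ^ 2) stdGaussian :=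
    integrable_pow_stdGaussian 2 le_rfl
  have h1 : (∫ x in Set.Iic (-c), x ^ 2 ∂stdGaussian)
      + ∫ x in Set.Ioi (-c), x ^ 2 ∂stdGaussian = ∫ x, x ^ 2 ∂stdGaussian :=
    intervalIntegral.integral_Iic_add_Ioi hint.integrableOn hint.integrableOn
  have hunion : Set.Ioc (-c) c ∪ Set.Ioi c = Set.Ioi (-c) :=
    Set.Ioc_union_Ioi_eq_Ioi (by linarith)
  have h2 : ∫ x in Set.Ioi (-c), x ^ 2 ∂stdGaussian
      = (∫ x in Set.Ioc (-c) c, x ^ 2 ∂stdGaussian)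
        + ∫ x in Set.Ioi c, x ^ 2 ∂stdGaussian := by
    rw [← hunion]
    exact setIntegral_union (Set.Ioc_disjoint_Ioi le_rfl) measurableSet_Ioi
      hint.integrableOn hint.integrableOn
  have h3 : ∫ x in Set.Icc (-c) c, x ^ 2 ∂stdGaussian
      = ∫ x in Set.Ioc (-c) c, x ^ 2 ∂stdGaussian :=
    integral_Icc_eq_integral_Ioc
  have h4 : ∫ x in Set.Ici c, x ^ 2 ∂stdGaussian
      = ∫ x in Set.Ioi c, x ^ 2 ∂stdGaussian :=
    MeasureTheory.integral_Ici_eq_integral_Ioi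
  have h5 := sym_sq c
  rw [integral_sq_stdGaussian] at h1
  rw [h3]
  linarith

lemma hasDerivAt_Ici_integral (f : ℝ → ℝ) (hf : Continuous f)
    (hint : Integrable (fun x => phi x * f x)) (c : ℝ) :
    HasDerivAt (fun b => ∫ x in Set.Ici b, f x ∂stdGaussian) (-(phi c * f c)) c := by
  set g : ℝ → ℝ := fun x => phi x * f x with hgdef
  have hg : Continuous g := continuous_phi.mul hf
  have heq : (fun b => ∫ x in Set.Ici b, f x ∂stdGaussian)
      = fun b => (∫ x, g x) - (∫ x in Set.Iic (0:ℝ), g x) - ∫ x in (0:ℝ)..b, g x := by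
    funext b
    rw [setIntegral_stdGaussian _ measurableSet_Ici]
    have h1 : (∫ x in Set.Iic b, g x) + ∫ x in Set.Ioi b, g x = ∫ x, g x :=
      intervalIntegral.integral_Iic_add_Ioi hint.integrableOn hint.integrableOn
    have h2 : (∫ x in Set.Iic b, g x) - ∫ x in Set.Iic (0:ℝ), g x = ∫ x in (0:ℝ)..b, g x :=
      intervalIntegral.integral_Iic_sub_Iic hint.integrableOn hint.integrableOn
    have h3 : ∫ x in Set.Ici b, g x = ∫ x in Set.Ioi b, g x :=
      MeasureTheory.integral_Ici_eq_integral_Ioi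
    linarith
  have hd : HasDerivAt (fun b => ∫ x in (0:ℝ)..b, g x) (g c) c :=
    intervalIntegral.integral_hasDerivAt_right (hg.intervalIntegrable _ _)
      hg.aestronglyMeasurable.stronglyMeasurableAtFilter hg.continuousAt
  have H := hd.const_sub ((∫ x, g x) - ∫ x in Set.Iic (0:ℝ), g x)
  rw [heq]
  have : (fun b => (∫ x, g x) - (∫ x in Set.Iic (0:ℝ), g x) - ∫ x in (0:ℝ)..b, g x)
      = fun b => ((∫ x, g x) - ∫ x in Set.Iic (0:ℝ), g x) - ∫ x in (0:ℝ)..b, g x := by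
    funext b; ring
  rw [this]
  exact H
  

def Phi (k : ℕ) (c : ℝ) : ℝ := ∫ x in Set.Ici c, x ^ k ∂stdGaussian

lemma hasDerivAt_Phi (k : ℕ) (hk : k ≤ 2) (c : ℝ) :
    HasDerivAt (Phi k) (-(phi c * c ^ k)) c :=
  hasDerivAt_Ici_integral (fun x => x ^ k) (continuous_pow k) (integrable_phi_mul k hk) c

lemma expand_sq (c : ℝ) :
    (∫ h in Set.Ici c, (h - c) ^ 2 ∂stdGaussian)
      = Phi 2 c - 2 * c * Phi 1 c + c ^ 2 * Phi 0 c := by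
  have i2 : IntegrableOn (fun x : ℝ => x ^ 2) (Set.Ici c) stdGaussian :=
    (integrable_pow_stdGaussian 2 le_rfl).integrableOn
  have i1 : IntegrableOn (fun x : ℝ => x ^ 1) (Set.Ici c) stdGaussian :=
    (integrable_pow_stdGaussian 1 (by norm_num)).integrableOn
  have i0 : IntegrableOn (fun x : ℝ => x ^ 0) (Set.Ici c) stdGaussian :=
    (integrable_pow_stdGaussian 0 (by norm_num)).integrableOn
  have e1 : (∫ h in Set.Ici c, (h - c) ^ 2 ∂stdGaussian)
      = ∫ h in Set.Ici c, (h ^ 2 - (2 * c) * h ^ 1 + c ^ 2 * h ^ 0) ∂stdGaussian :=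
    setIntegral_congr_fun measurableSet_Ici fun h _ => by ring
  rw [e1, integral_add (by exact (i2.sub (i1.const_mul (2*c)))) (i0.const_mul (c^2)),
    integral_sub i2 (i1.const_mul (2*c)), integral_const_mul, integral_const_mul]
  simp only [Phi]

lemma Phi0_eq (c : ℝ) : Phi 0 c = (stdGaussian (Set.Ici c)).toReal := by
  simp only [Phi, pow_zero]
  rw [setIntegral_const]
  simp
  rfl

lemma Phi_nonneg (k : ℕ) (hk : k ≤ 2) (c : ℝ) (hc : 0 ≤ c) : 0 ≤ Phi k c := by
  refine setIntegral_nonneg measurableSet_Ici fun x hx => ?_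
  exact pow_nonneg (le_trans hc hx) k


end SaddleAux

namespace SaddleAux

/-- Lower bound on `Dfun` for positive `β`. -/
lemma Dfun_lower (δ ρ P lam : ℝ) (hP : 0 < P) (hlam : 0 ≤ lam) {β τ : ℝ}
    (hβ : 0 < β) (hτ : 0 < τ) :
    τ * β * δ / 2 + ρ * β / (2 * τ) - β ^ 2 / 4
      - (β / (1 / τ + 2 * lam / β)) / 2 ≤ Dfun δ ρ P lam β τ := by
  have hα : 0 < 1 / τ + 2 * lam / β :=
    add_pos_of_pos_of_nonneg (by positivity) (by positivity)
  have hInn : 0 ≤ ∫ h in Set.Ici (Real.sqrt P * (1 / τ + 2 * lam / β)),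
      (h - Real.sqrt P * (1 / τ + 2 * lam / β)) ^ 2 ∂stdGaussian :=
    setIntegral_nonneg measurableSet_Ici fun x _ => sq_nonneg _
  have hY : (β / (1 / τ + 2 * lam / β)) * (-(1/2)) ≤ Yfun P lam β τ := by
    rw [Yfun]
    apply mul_le_mul_of_nonneg_left _ (div_nonneg hβ.le hα.le)
    linarith
  rw [Dfun, if_neg hβ.ne']
  nlinarith [hY]

/-- The saddle `βs` is positive. -/
lemma saddle_beta_pos (δ ρ P lam : ℝ)
    (hδ : 0 < δ) (hρ : 0 < ρ) (hP : 0 < P) (hlam : 0 ≤ lam)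
    (hcase : 0 < lam ∨ (lam = 0 ∧ 1 < δ))
    (βs τs : ℝ) (hsad : IsSaddle δ ρ P lam βs τs) : 0 < βs := by
  obtain ⟨hβ0, hτ, hmax, _⟩ := hsad
  rcases hβ0.lt_or_eq with h | h
  · exact h
  exfalso
  have hzero : Dfun δ ρ P lam βs τs = 0 := by rw [Dfun, if_pos h.symm]
  rcases hcase with hl | ⟨hl, hδ1⟩
  · -- lam > 0
    set β : ℝ := 2 * τs * δ * lam / (1 + lam) with hβdef
    have hβpos : 0 < β := by positivity
    have hτinv : (0:ℝ) < 1 / τs := by positivity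
    have h2l : 0 < 2 * lam / β := by positivity
    have hfrac : β / (1 / τs + 2 * lam / β) ≤ β ^ 2 / (2 * lam) := by
      rw [div_le_div_iff₀ (by linarith) (by positivity)]
      have h1 : β ^ 2 * (2 * lam / β) = β * (2 * lam) := by
        field_simp
      nlinarith [sq_nonneg β]
    have hlow := Dfun_lower δ ρ P lam hP hlam hβpos hτ
    have hle := hmax β hβpos.le
    rw [hzero] at hle
    have hid : β ^ 2 / 4 + β ^ 2 / (2 * lam) / 2 = τs * β * δ / 2 := by
      rw [hβdef]; field_simp; ring
    have hpos : 0 < ρ * β / (2 * τs) := by positivity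
    linarith
  · -- lam = 0, δ > 1
    subst hl
    set β : ℝ := ρ / τs with hβdef
    have hβpos : 0 < β := by positivity
    have hfrac : β / (1 / τs + 2 * 0 / β) = β * τs := by
      rw [show 2 * 0 / β = (0:ℝ) by ring]
      field_simp
      ring
    have hlow := Dfun_lower δ ρ (P := P) 0 hP le_rfl hβpos hτ
    have hle := hmax β hβpos.le
    rw [hzero] at hle
    rw [hfrac] at hlow
    have h1 : τs * β * δ / 2 - β * τs / 2 = τs * β * (δ - 1) / 2 := by ring
    have h2 : ρ * β / (2 * τs) - β ^ 2 / 4 = ρ ^ 2 / (4 * τs ^ 2) := by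
      rw [hβdef]; field_simp; ring
    have h3 : 0 < τs * β * (δ - 1) / 2 := by
      have : 0 < δ - 1 := by linarith
      positivity
    have h4 : 0 < ρ ^ 2 / (4 * τs ^ 2) := by positivity
    linarith

end SaddleAux

end

/-- first-order optimality condition satisfied by the saddle point:
`(τ*)²δ − ρ = 2P·Pr[H ≥ √P·α*] + (1/(α*)²)·E[H²·1{−√P·α* ≤ H ≤ √P·α*}]`
where `α* = 1/τ* + 2λ/β*`. -/
theorem saddle_point_first_order_condition (δ ρ P lam : ℝ)
    (hδ : 0 < δ) (hρ : 0 < ρ) (hP : 0 < P) (hlam : 0 ≤ lam)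
    (hcase : 0 < lam ∨ (lam = 0 ∧ 1 < δ))
    (βs τs : ℝ) (hsad : IsSaddle δ ρ P lam βs τs) :
    τs ^ 2 * δ - ρ =
      2 * P * (stdGaussian (Set.Ici (Real.sqrt P * (1 / τs + 2 * lam / βs)))).toReal
      + (1 / (1 / τs + 2 * lam / βs) ^ 2) *
        ∫ h in Set.Icc (-(Real.sqrt P * (1 / τs + 2 * lam / βs)))
            (Real.sqrt P * (1 / τs + 2 * lam / βs)), h ^ 2 ∂stdGaussian := by
    open SaddleAux in
  have hβ : 0 < βs := SaddleAux.saddle_beta_pos δ ρ P lam hδ hρ hP hlam hcase βs τs hsad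
  obtain ⟨hβ0, hτ, hmax, hmin⟩ := hsad
  set u : ℝ := Real.sqrt P with hu_def
  have hu : 0 < u := Real.sqrt_pos.2 hP
  have hu2 : u ^ 2 = P := Real.sq_sqrt hP.le
  set α : ℝ := 1 / τs + 2 * lam / βs with hα_def
  have hα : 0 < α := add_pos_of_pos_of_nonneg (by positivity) (by positivity)
  set c : ℝ := u * α with hc_def
  have hc : 0 < c := by positivity
  set p0 : ℝ := SaddleAux.Phi 0 c with hp0
  set p1 : ℝ := SaddleAux.Phi 1 c with hp1
  set p2 : ℝ := SaddleAux.Phi 2 c with hp2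
  set q : ℝ := SaddleAux.phi c with hq
  -- the function of τ and its derivative
  set W : ℝ → ℝ := fun y =>
    SaddleAux.Phi 2 y - 2 * y * SaddleAux.Phi 1 y + y ^ 2 * SaddleAux.Phi 0 y - 1/2
    with hW_def
  set myD : ℝ → ℝ := fun τ => τ * βs * δ / 2 + ρ * βs / (2 * τ) - βs ^ 2 / 4
      + (βs / (1 / τ + 2 * lam / βs)) * W (u * (1 / τ + 2 * lam / βs)) with hmyD_def
  have hDf : (fun τ => Dfun δ ρ P lam βs τ) = myD := by
    funext τ
    rw [hmyD_def, Dfun, if_neg hβ.ne', Yfun, SaddleAux.expand_sq, hW_def]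
  -- derivatives
  have hA' : HasDerivAt (fun τ : ℝ => 1 / τ + 2 * lam / βs) (-(1 / τs ^ 2)) τs := by
    have b := (hasDerivAt_inv hτ.ne').add_const (2 * lam / βs)
    have e : (fun τ : ℝ => 1 / τ + 2 * lam / βs) = fun τ : ℝ => τ⁻¹ + 2 * lam / βs := by
      funext τ; rw [one_div]
    rw [e]
    exact b.congr_deriv (by field_simp)
  have h_t1 : HasDerivAt (fun τ : ℝ => τ * βs * δ / 2) (βs * δ / 2) τs := by
    have b := (hasDerivAt_id τs).mul_const (βs * δ / 2)
    have e : (fun τ : ℝ => τ * βs * δ / 2) = fun τ : ℝ => τ * (βs * δ / 2) := by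
      funext τ; ring
    rw [e]
    exact b.congr_deriv (by simp)
  have h_t2 : HasDerivAt (fun τ : ℝ => ρ * βs / (2 * τ)) (-(ρ * βs / (2 * τs ^ 2))) τs := by
    have b := (hasDerivAt_inv hτ.ne').const_mul (ρ * βs / 2)
    have e : (fun τ : ℝ => ρ * βs / (2 * τ)) = fun τ : ℝ => ρ * βs / 2 * τ⁻¹ := by
      funext τ
      rcases eq_or_ne τ 0 with rfl | hτ0
      · simp
      · field_simp <;> ring
    rw [e]
    exact b.congr_deriv (by field_simp)
  have h_t3 : HasDerivAt (fun τ : ℝ => βs / (1 / τ + 2 * lam / βs))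
      (βs * (1 / τs ^ 2) / α ^ 2) τs := by
    have b := (hA'.inv hα.ne').const_mul βs
    have e : (fun τ : ℝ => βs / (1 / τ + 2 * lam / βs))
        = fun τ : ℝ => βs * (1 / τ + 2 * lam / βs)⁻¹ := by
      funext τ; rw [div_eq_mul_inv]
    rw [e]
    exact b.congr_deriv (by rw [← hα_def]; field_simp)
  have h0 : HasDerivAt (SaddleAux.Phi 0) (-(q * c ^ 0)) c :=
    SaddleAux.hasDerivAt_Phi 0 (by norm_num) c
  have h1 : HasDerivAt (SaddleAux.Phi 1) (-(q * c ^ 1)) c :=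
    SaddleAux.hasDerivAt_Phi 1 (by norm_num) c
  have h2 : HasDerivAt (SaddleAux.Phi 2) (-(q * c ^ 2)) c :=
    SaddleAux.hasDerivAt_Phi 2 (by norm_num) c
  have h_t4 : HasDerivAt W (-2 * p1 + 2 * c * p0) c := by
    have bmid := ((hasDerivAt_id c).const_mul 2).mul h1
    have blast := (hasDerivAt_pow 2 c).mul h0
    have b := ((h2.sub bmid).add blast).sub_const (1/2 : ℝ)
    rw [hW_def]
    refine b.congr_deriv ?_
    simp only [id_eq, ← hp0, ← hp1]
    ring
  have h_t5 : HasDerivAt (fun τ : ℝ => u * (1 / τ + 2 * lam / βs)) (-(u / τs ^ 2)) τs := by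
    have b := hA'.const_mul u
    refine b.congr_deriv ?_
    ring
  have h_t6 : HasDerivAt (fun τ : ℝ => W (u * (1 / τ + 2 * lam / βs)))
      ((-2 * p1 + 2 * c * p0) * (-(u / τs ^ 2))) τs := by
    have hpt : u * (1 / τs + 2 * lam / βs) = c := by rw [hc_def, hα_def]
    have h_t4' : HasDerivAt W (-2 * p1 + 2 * c * p0) (u * (1 / τs + 2 * lam / βs)) := by
      rw [hpt]; exact h_t4
    exact h_t4'.comp τs h_t5
  have h_t7 := h_t3.mul h_t6
  have hg : HasDerivAt myD
      (βs * δ / 2 + -(ρ * βs / (2 * τs ^ 2))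
        + (βs * (1 / τs ^ 2) / α ^ 2 * W (u * (1 / τs + 2 * lam / βs))
          + βs / (1 / τs + 2 * lam / βs) * ((-2 * p1 + 2 * c * p0) * (-(u / τs ^ 2))))) τs := by
    rw [hmyD_def]
    exact ((h_t1.add h_t2).sub_const (βs ^ 2 / 4)).add h_t7
  -- local min gives derivative zero
  have hloc : IsLocalMin (fun τ => Dfun δ ρ P lam βs τ) τs := by
    have hev : ∀ᶠ τ in nhds τs, Dfun δ ρ P lam βs τs ≤ Dfun δ ρ P lam βs τ := by
      filter_upwards [isOpen_Ioi.mem_nhds (Set.mem_Ioi.2 hτ)] with τ hτ'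
      exact hmin τ hτ'
    exact hev
  rw [hDf] at hloc
  have hE := hloc.hasDerivAt_eq_zero hg
  -- rewrite W value
  have hWval : W (u * (1 / τs + 2 * lam / βs)) = p2 - 2 * c * p1 + c ^ 2 * p0 - 1/2 := by
    have hpt : u * (1 / τs + 2 * lam / βs) = c := by rw [hc_def, hα_def]
    rw [hpt, hW_def]
  rw [hWval, ← hα_def] at hE
  -- final identities
  have hJ : (∫ h in Set.Icc (-c) c, h ^ 2 ∂stdGaussian) = 1 - 2 * p2 := by
    rw [hp2, SaddleAux.Phi]
    exact SaddleAux.split_sq hc.le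
  have hQ : (stdGaussian (Set.Ici c)).toReal = p0 := (SaddleAux.Phi0_eq c).symm
  have hcα : u * (1 / τs + 2 * lam / βs) = c := by rw [hc_def, hα_def]
  rw [hQ, hJ]
  -- algebra from hE
  rw [hc_def] at hE
  rw [← hu2]
  field_simp at hE ⊢
  have hne : (0:ℝ) < 4 * βs * τs ^ 4 * α := by positivity
  have hkey : (4 * βs * τs ^ 4 * α)
      * ((τs ^ 2 * δ - ρ) * α ^ 2 - (2 * u ^ 2 * p0 * α ^ 2 + (1 - 2 * p2))) = 0 := by
    linear_combination (4 * τs ^ 4 * α) * hE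
  rcases mul_eq_zero.mp hkey with h' | h'
  · exact absurd h' hne.ne'
  · linarith [sub_eq_zero.mp h']
end

section
/- Assume λ = 0, δ > 1 and ρ > 0, and for each P > 0 let (β*(P), τ*(P)) be the unique saddle point of max_{β ≥ 0} min_{τ > 0} D(β,τ) with parameter P. Then, as P → ∞, τ*(P) converges to √(ρ/(δ − 1)) and β*(P) converges to 2√(ρ(δ − 1)). -/
open MeasureTheory ProbabilityTheory Filter

noncomputable section AuxGint

/-- The Gaussian partial second moment `∫_{h ≥ x} (h-x)² dγ(h)`. -/
def gint (x : ℝ) : ℝ := ∫ h in Set.Ici x, (h - x) ^ 2 ∂stdGaussian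

lemma gint_nonneg (x : ℝ) : 0 ≤ gint x :=
  setIntegral_nonneg measurableSet_Ici (fun h _ => sq_nonneg _)

lemma integrable_sq_stdGaussian : Integrable (fun h : ℝ => h ^ 2) stdGaussian := by
  rw [_root_.stdGaussian, gaussianReal_of_var_ne_zero 0 one_ne_zero,
    integrable_withDensity_iff (measurable_gaussianPDF 0 1)
      (ae_of_all _ fun x => ENNReal.ofReal_lt_top)]
  have h0 : Integrable (fun x : ℝ => x ^ 2 * Real.exp (-(1/2) * x ^ 2)) := by
    have h := integrable_rpow_mul_exp_neg_mul_sq (b := (1:ℝ)/2) (by norm_num) (s := 2)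
      (by norm_num)
    refine h.congr (ae_of_all _ fun x => ?_)
    norm_num
  have hpdf : ∀ x : ℝ, (ProbabilityTheory.gaussianPDF 0 1 x).toReal
      = (Real.sqrt (2 * Real.pi))⁻¹ * Real.exp (-(1/2) * x ^ 2) := by
    intro x
    rw [ProbabilityTheory.gaussianPDF, ENNReal.toReal_ofReal
      (ProbabilityTheory.gaussianPDFReal_nonneg _ _ _), ProbabilityTheory.gaussianPDFReal]
    norm_num
    exact Or.inl (by ring)
  refine ((h0.const_mul ((Real.sqrt (2 * Real.pi))⁻¹)).congr (ae_of_all _ fun x => ?_))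
  dsimp only
  rw [hpdf x]; ring

lemma gint_le (x : ℝ) (hx : 0 ≤ x) : gint x ≤ ∫ h in Set.Ici x, h ^ 2 ∂stdGaussian := by
  have hint : IntegrableOn (fun h : ℝ => (h - x) ^ 2) (Set.Ici x) stdGaussian := by
    refine Integrable.mono integrable_sq_stdGaussian.integrableOn
      (((measurable_id.sub_const x).pow_const 2).aestronglyMeasurable) ?_
    rw [ae_restrict_iff' measurableSet_Ici]
    filter_upwards with h hh
    rw [Real.norm_eq_abs, Real.norm_eq_abs, abs_of_nonneg (sq_nonneg _),
      abs_of_nonneg (sq_nonneg _)]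
    have hxh : x ≤ h := hh
    nlinarith
  refine setIntegral_mono_on hint integrable_sq_stdGaussian.integrableOn
    measurableSet_Ici fun h hh => ?_
  have hxh : x ≤ h := hh
  nlinarith

lemma tail_sq_tendsto :
    Filter.Tendsto (fun x => ∫ h in Set.Ici x, h ^ 2 ∂stdGaussian) Filter.atTop (nhds 0) := by
  have key : Filter.Tendsto
      (fun x => ∫ h, (Set.Ici x).indicator (fun h : ℝ => h ^ 2) h ∂stdGaussian)
      Filter.atTop (nhds (∫ _h, (0 : ℝ) ∂stdGaussian)) := by
    refine tendsto_integral_filter_of_dominated_convergence (fun h => h ^ 2)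
      (Filter.Eventually.of_forall fun x =>
        ((measurable_id.pow_const 2).indicator measurableSet_Ici).aestronglyMeasurable)
      (Filter.Eventually.of_forall fun x => ae_of_all _ fun h => ?_)
      integrable_sq_stdGaussian (ae_of_all _ fun h => ?_)
    · rw [Real.norm_eq_abs]
      rcases Set.indicator_eq_zero_or_self (Set.Ici x) (fun h : ℝ => h ^ 2) h with h0 | h0 <;>
        rw [h0]
      · simpa using sq_nonneg h
      · rw [abs_of_nonneg (sq_nonneg _)]
    · refine tendsto_const_nhds.congr' ?_
      filter_upwards [Filter.eventually_gt_atTop h] with x hx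
      exact (Set.indicator_of_notMem (by simpa using hx.not_ge) _).symm
  simp only [integral_zero] at key
  refine key.congr fun x => ?_
  rw [integral_indicator measurableSet_Ici]

lemma gint_tendsto : Filter.Tendsto gint Filter.atTop (nhds 0) := by
  refine squeeze_zero' (Filter.Eventually.of_forall gint_nonneg) ?_ tail_sq_tendsto
  filter_upwards [Filter.eventually_ge_atTop (0 : ℝ)] with x hx
  exact gint_le x hx

lemma Yfun_zero (P β τ : ℝ) : Yfun P 0 β τ = β * τ * (gint (Real.sqrt P / τ) - 1 / 2) := by
  rw [Yfun, gint]
  rw [show (1 : ℝ) / τ + 2 * 0 / β = 1 / τ by ring]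
  rw [mul_one_div, one_div, div_eq_mul_inv, inv_inv]

lemma Dfun_pos (δ ρ P β τ : ℝ) (hβ : β ≠ 0) :
    Dfun δ ρ P 0 β τ = β * τ * (δ - 1) / 2 + ρ * β / (2 * τ) - β ^ 2 / 4
      + β * τ * gint (Real.sqrt P / τ) := by
  rw [Dfun, if_neg hβ, Yfun_zero P β τ]
  ring

lemma arithA (δ ρ s t0 t r et : ℝ) (hd : 0 < δ - 1) (hs : 0 < s) (ht : 0 < t) (ht0 : 0 < t0)
    (hρt0 : (δ - 1) * t0 ^ 2 = ρ) (hs_t0 : s = (δ - 1) * t0) (hr : r * t = ρ) (het : 0 ≤ et) :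
    s ^ 2 ≤ 2 * s * t * (δ - 1) / 2 + s * r - (2 * s) ^ 2 / 4 + 2 * s * t * et := by
  nlinarith [mul_nonneg (mul_nonneg hs.le hd.le) (sq_nonneg (t - t0)),
    mul_nonneg (mul_nonneg (mul_nonneg hs.le het) ht.le) ht.le, mul_pos hs ht]

lemma arithB (s t0 b e : ℝ) (hs : 0 < s) (ht0 : 0 < t0) (hb : 0 < b) (he0 : 0 ≤ e) (he1 : e ≤ 1)
    (hstar : s ^ 2 ≤ b * s - b ^ 2 / 4 + b * t0 * e) :
    b ≤ 4 * (s + t0) ∧ (b - 2 * s) ^ 2 ≤ 4 * (4 * (s + t0)) * t0 * e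
      ∧ b * s - b ^ 2 / 4 ≤ s ^ 2 := by
  have h1 : b ≤ 4 * (s + t0) := by
    nlinarith [mul_nonneg (mul_nonneg hb.le ht0.le) (sub_nonneg.mpr he1), sq_nonneg s]
  refine ⟨h1, ?_, by nlinarith [sq_nonneg (b - 2 * s)]⟩
  nlinarith [mul_nonneg (mul_nonneg (sub_nonneg.mpr h1) ht0.le) he0]

lemma arithC (δ ρ s t0 C T2 K t r e : ℝ) (hd : 0 < δ - 1) (hρ : 0 < ρ) (hs : 0 < s)
    (ht0 : 0 < t0) (ht : 0 < t) (he0 : 0 ≤ e) (he1 : e ≤ 1)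
    (hρt0 : (δ - 1) * t0 ^ 2 = ρ) (hs_t0 : s = (δ - 1) * t0) (hCpos : 0 < C)
    (hT2 : (δ - 1) ^ 2 * T2 = 4 * (s ^ 2 + C * t0)) (hK : (δ - 1) ^ 2 * K = C * (1 + T2))
    (hr : r * t = ρ) (hrpos : 0 < r)
    (hstar2 : (t * (δ - 1) / 2 + r / 2) ^ 2 ≤ s ^ 2 + C * t0 * e) :
    (t - t0) ^ 2 ≤ K * e := by
  obtain ⟨A, hA_def⟩ : ∃ A : ℝ, A = t * (δ - 1) / 2 + r / 2 := ⟨_, rfl⟩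
  rw [← hA_def] at hstar2
  have hApos : 0 < A := by rw [hA_def]; nlinarith [mul_pos ht hd]
  have ht2 : t ^ 2 ≤ T2 := by
    have h1 : t * (δ - 1) / 2 ≤ A := by rw [hA_def]; nlinarith
    have h2 : (t * (δ - 1) / 2) ^ 2 ≤ A ^ 2 := by nlinarith [mul_pos ht hd]
    have h3 : (t * (δ - 1) / 2) ^ 2 ≤ s ^ 2 + C * t0 := by
      nlinarith [mul_nonneg (mul_nonneg hCpos.le ht0.le) (sub_nonneg.mpr he1)]
    have h4 : (δ - 1) ^ 2 * t ^ 2 ≤ (δ - 1) ^ 2 * T2 := by linarith [h3, hT2]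
    exact le_of_mul_le_mul_left h4 (by positivity)
  have hte : t ≤ 1 + T2 := by nlinarith [sq_nonneg (t - 1)]
  have hs2eq : s ^ 2 = (δ - 1) ^ 2 * t0 ^ 2 := by rw [hs_t0]; ring
  have h2tA : t * A * 2 = (δ - 1) * (t ^ 2 + t0 ^ 2) := by
    have htr : t * r = (δ - 1) * t0 ^ 2 := by rw [mul_comm, hr, ← hρt0]
    rw [hA_def]; linear_combination htr
  have hq : ((δ - 1) * (t ^ 2 + t0 ^ 2)) ^ 2 ≤ 4 * t ^ 2 * s ^ 2 + 4 * t ^ 2 * (C * t0 * e) := by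
    have h4 := mul_le_mul_of_nonneg_left hstar2 (by positivity : (0:ℝ) ≤ 4 * t ^ 2)
    calc ((δ - 1) * (t ^ 2 + t0 ^ 2)) ^ 2 = 4 * t ^ 2 * A ^ 2 := by rw [← h2tA]; ring
      _ ≤ 4 * t ^ 2 * (s ^ 2 + C * t0 * e) := h4
      _ = 4 * t ^ 2 * s ^ 2 + 4 * t ^ 2 * (C * t0 * e) := by ring
  have hq2 : ((δ - 1) ^ 2 * (t - t0) ^ 2) * (t + t0) ^ 2 ≤ 4 * t ^ 2 * (C * t0 * e) := by
    have hident : ((δ - 1) ^ 2 * (t - t0) ^ 2) * (t + t0) ^ 2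
        = ((δ - 1) * (t ^ 2 + t0 ^ 2)) ^ 2 - 4 * t ^ 2 * s ^ 2 := by rw [hs2eq]; ring
    rw [hident]
    linarith [hq]
  have hXpos : (0:ℝ) ≤ (δ - 1) ^ 2 * (t - t0) ^ 2 := by positivity
  have h4tt0 : 4 * t * t0 ≤ (t + t0) ^ 2 := by nlinarith [sq_nonneg (t - t0)]
  have hc : ((δ - 1) ^ 2 * (t - t0) ^ 2) * (4 * t * t0) ≤ 4 * t ^ 2 * (C * t0 * e) :=
    le_trans (mul_le_mul_of_nonneg_left h4tt0 hXpos) hq2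
  have hd2 : (δ - 1) ^ 2 * (t - t0) ^ 2 ≤ C * t * e := by
    rw [show 4 * t ^ 2 * (C * t0 * e) = (C * t * e) * (4 * t * t0) by ring] at hc
    exact le_of_mul_le_mul_right hc (by positivity)
  have h5 : C * t * e ≤ C * (1 + T2) * e :=
    mul_le_mul_of_nonneg_right (mul_le_mul_of_nonneg_left hte hCpos.le) he0
  have h6 : (δ - 1) ^ 2 * (t - t0) ^ 2 ≤ (δ - 1) ^ 2 * (K * e) := by
    rw [show (δ - 1) ^ 2 * (K * e) = ((δ - 1) ^ 2 * K) * e by ring, hK]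
    linarith
  exact le_of_mul_le_mul_left h6 (by positivity)

lemma arithD (δ ρ t r G : ℝ) (ht : t ≠ 0) (hr : r * t = ρ) :
    2 * (t * (δ - 1) / 2 + r / 2) * t * (δ - 1) / 2
      + ρ * (2 * (t * (δ - 1) / 2 + r / 2)) / (2 * t)
      - (2 * (t * (δ - 1) / 2 + r / 2)) ^ 2 / 4
      + 2 * (t * (δ - 1) / 2 + r / 2) * t * G
    = (t * (δ - 1) / 2 + r / 2) ^ 2 + 2 * (t * (δ - 1) / 2 + r / 2) * t * G := by
  subst hr
  field_simp
  ring

end AuxGint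

set_option maxHeartbeats 1000000 in
/-- for `λ = 0` and `δ > 1`, as `P → ∞`, `τ*(P) → √(ρ/(δ−1))` and
`β*(P) → 2√(ρ(δ−1))`. -/
theorem saddle_point_limit_P_infty_ZF (δ ρ : ℝ)
    (hδ : 1 < δ) (hρ : 0 < ρ)
    (βs τs : ℝ → ℝ)
    (hsad : ∀ P : ℝ, 0 < P → IsSaddle δ ρ P 0 (βs P) (τs P)) :
    Tendsto τs atTop (nhds (Real.sqrt (ρ / (δ - 1)))) ∧
    Tendsto βs atTop (nhds (2 * Real.sqrt (ρ * (δ - 1)))) := by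
  have hd : (0 : ℝ) < δ - 1 := by linarith
  obtain ⟨s, hs_def⟩ : ∃ s : ℝ, s = Real.sqrt (ρ * (δ - 1)) := ⟨_, rfl⟩
  obtain ⟨t0, ht0_def⟩ : ∃ t0 : ℝ, t0 = Real.sqrt (ρ / (δ - 1)) := ⟨_, rfl⟩
  have hs : 0 < s := hs_def ▸ Real.sqrt_pos.mpr (by positivity)
  have ht0 : 0 < t0 := ht0_def ▸ Real.sqrt_pos.mpr (by positivity)
  have ht02 : t0 ^ 2 = ρ / (δ - 1) := ht0_def ▸ Real.sq_sqrt (by positivity)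
  have hρt0 : (δ - 1) * t0 ^ 2 = ρ := by rw [ht02]; field_simp
  have hst : s * t0 = ρ := by
    rw [hs_def, ht0_def, ← Real.sqrt_mul (by positivity)]
    rw [show ρ * (δ - 1) * (ρ / (δ - 1)) = ρ ^ 2 by field_simp]
    exact Real.sqrt_sq hρ.le
  have hs_t0 : s = (δ - 1) * t0 := by
    have h1 : s * t0 = ((δ - 1) * t0) * t0 := by rw [hst]; nlinarith [hρt0]
    exact mul_right_cancel₀ ht0.ne' h1
  obtain ⟨C, hC_def⟩ : ∃ C : ℝ, C = 4 * (s + t0) := ⟨_, rfl⟩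
  have hC : 0 < C := by rw [hC_def]; positivity
  obtain ⟨T2, hT2_def⟩ : ∃ T2 : ℝ, T2 = 4 * (s ^ 2 + C * t0) / (δ - 1) ^ 2 := ⟨_, rfl⟩
  have hT2 : (δ - 1) ^ 2 * T2 = 4 * (s ^ 2 + C * t0) := by rw [hT2_def]; field_simp
  obtain ⟨K, hK_def⟩ : ∃ K : ℝ, K = C * (1 + T2) / (δ - 1) ^ 2 := ⟨_, rfl⟩
  have hK : (δ - 1) ^ 2 * K = C * (1 + T2) := by rw [hK_def]; field_simp
  -- the key quantitative estimates
  have key : ∀ P : ℝ, 0 < P → gint (Real.sqrt P / t0) ≤ 1 →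
      (βs P - 2 * s) ^ 2 ≤ 4 * C * t0 * gint (Real.sqrt P / t0) ∧
      (τs P - t0) ^ 2 ≤ K * gint (Real.sqrt P / t0) := by
    intro P hP he1
    obtain ⟨hb0, ht, hmax, hmin⟩ := hsad P hP
    have he0 : 0 ≤ gint (Real.sqrt P / t0) := gint_nonneg _
    have het0 : 0 ≤ gint (Real.sqrt P / τs P) := gint_nonneg _
    have hr : (ρ / τs P) * τs P = ρ := div_mul_cancel₀ ρ ht.ne'
    have hrpos : 0 < ρ / τs P := div_pos hρ ht
    have h2s : (0:ℝ) < 2 * s := by linarith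
    -- the saddle value is at least s²
    have hV1 : s ^ 2 ≤ Dfun δ ρ P 0 (2 * s) (τs P) := by
      rw [Dfun_pos δ ρ P (2 * s) (τs P) h2s.ne']
      rw [show ρ * (2 * s) / (2 * τs P) = s * (ρ / τs P) by ring]
      exact arithA δ ρ s t0 (τs P) (ρ / τs P) _ hd hs ht ht0 hρt0 hs_t0 hr het0
    have hVs : s ^ 2 ≤ Dfun δ ρ P 0 (βs P) (τs P) :=
      le_trans hV1 (hmax (2 * s) h2s.le)
    -- βs P is positive
    have hb_pos : 0 < βs P := by
      rcases hb0.lt_or_eq with h | h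
      · exact h
      · exfalso
        rw [← h, Dfun, if_pos rfl] at hVs
        nlinarith
    -- upper bound on the saddle value
    have hV3 : Dfun δ ρ P 0 (βs P) (τs P) ≤ Dfun δ ρ P 0 (βs P) t0 := hmin t0 ht0
    have hD : Dfun δ ρ P 0 (βs P) t0
        = βs P * s - βs P ^ 2 / 4 + βs P * t0 * gint (Real.sqrt P / t0) := by
      rw [Dfun_pos δ ρ P (βs P) t0 hb_pos.ne', hs_t0, ← hρt0]
      field_simp
      ring
    have hstar : s ^ 2 ≤ βs P * s - βs P ^ 2 / 4 + βs P * t0 * gint (Real.sqrt P / t0) := by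
      rw [← hD]; exact le_trans hVs hV3
    obtain ⟨hbC, hbeta, hbs⟩ := arithB s t0 (βs P) _ hs ht0 hb_pos he0 he1 hstar
    have hbC' : βs P ≤ C := by rw [hC_def]; exact hbC
    refine ⟨by rw [hC_def]; exact hbeta, ?_⟩
    -- τ estimate
    have h2A : (0:ℝ) < 2 * (τs P * (δ - 1) / 2 + (ρ / τs P) / 2) := by
      nlinarith [mul_pos ht hd]
    have hDA : Dfun δ ρ P 0 (2 * (τs P * (δ - 1) / 2 + (ρ / τs P) / 2)) (τs P)
        = (τs P * (δ - 1) / 2 + (ρ / τs P) / 2) ^ 2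
          + 2 * (τs P * (δ - 1) / 2 + (ρ / τs P) / 2) * τs P * gint (Real.sqrt P / τs P) := by
      rw [Dfun_pos δ ρ P _ (τs P) h2A.ne']
      exact arithD δ ρ (τs P) (ρ / τs P) _ ht.ne' hr
    have hVA : (τs P * (δ - 1) / 2 + (ρ / τs P) / 2) ^ 2 ≤ Dfun δ ρ P 0 (βs P) (τs P) := by
      have h1 := hmax _ h2A.le
      rw [hDA] at h1
      have h2 : 0 ≤ 2 * (τs P * (δ - 1) / 2 + (ρ / τs P) / 2) * τs P
          * gint (Real.sqrt P / τs P) :=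
        mul_nonneg (mul_nonneg h2A.le ht.le) het0
      linarith
    have hVle : Dfun δ ρ P 0 (βs P) (τs P) ≤ s ^ 2 + C * t0 * gint (Real.sqrt P / t0) := by
      have h7 : βs P * t0 * gint (Real.sqrt P / t0) ≤ C * t0 * gint (Real.sqrt P / t0) :=
        mul_le_mul_of_nonneg_right (mul_le_mul_of_nonneg_right hbC' ht0.le) he0
      calc Dfun δ ρ P 0 (βs P) (τs P) ≤ Dfun δ ρ P 0 (βs P) t0 := hV3
        _ = βs P * s - βs P ^ 2 / 4 + βs P * t0 * gint (Real.sqrt P / t0) := hD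
        _ ≤ s ^ 2 + C * t0 * gint (Real.sqrt P / t0) := by linarith
    have hstar2 : (τs P * (δ - 1) / 2 + (ρ / τs P) / 2) ^ 2
        ≤ s ^ 2 + C * t0 * gint (Real.sqrt P / t0) := le_trans hVA hVle
    exact arithC δ ρ s t0 C T2 K (τs P) (ρ / τs P) _ hd hρ hs ht0 ht he0 he1 hρt0 hs_t0
      hC hT2 hK hr hrpos hstar2
  -- the error term tends to zero
  have hsqrt_at : Tendsto Real.sqrt atTop atTop := by
    refine tendsto_atTop_atTop.mpr fun c => ⟨c ^ 2 + 1, fun a ha => ?_⟩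
    calc c ≤ |c| := le_abs_self c
      _ = Real.sqrt (c ^ 2) := (Real.sqrt_sq_eq_abs c).symm
      _ ≤ Real.sqrt a := Real.sqrt_le_sqrt (by linarith)
  have hE : Tendsto (fun P => gint (Real.sqrt P / t0)) atTop (nhds 0) :=
    gint_tendsto.comp (hsqrt_at.atTop_div_const ht0)
  have hEev : ∀ᶠ P in atTop, gint (Real.sqrt P / t0) ≤ 1 :=
    hE.eventually_le_const (by norm_num)
  have hkey : ∀ᶠ P in atTop,
      (βs P - 2 * s) ^ 2 ≤ 4 * C * t0 * gint (Real.sqrt P / t0) ∧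
      (τs P - t0) ^ 2 ≤ K * gint (Real.sqrt P / t0) := by
    filter_upwards [eventually_gt_atTop (0 : ℝ), hEev] with P hP h1
    exact key P hP h1
  have habs : ∀ (f : ℝ → ℝ) (c : ℝ), Tendsto (fun P => (f P - c) ^ 2) atTop (nhds 0) →
      Tendsto f atTop (nhds c) := by
    intro f c h
    have h1 : Tendsto (fun P => |f P - c|) atTop (nhds 0) := by
      have h2 := (Real.continuous_sqrt.tendsto 0).comp h
      simp only [Function.comp_def, Real.sqrt_sq_eq_abs, Real.sqrt_zero] at h2
      exact h2
    have h3 : Tendsto (fun P => f P - c) atTop (nhds 0) :=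
      (tendsto_zero_iff_abs_tendsto_zero _).mpr h1
    simpa using h3.add_const c
  constructor
  · rw [← ht0_def]
    refine habs τs t0 ?_
    refine squeeze_zero' (Eventually.of_forall fun P => sq_nonneg _)
      (hkey.mono fun P h => h.2) ?_
    simpa using hE.const_mul K
  · rw [show (2 : ℝ) * Real.sqrt (ρ * (δ - 1)) = 2 * s by rw [hs_def]]
    refine habs βs (2 * s) ?_
    refine squeeze_zero' (Eventually.of_forall fun P => sq_nonneg _)
      (hkey.mono fun P h => h.1) ?_
    simpa using hE.const_mul (4 * C * t0)
end

section
/- Let f : ℝⁿ → ℝ be a convex function, let x̄ ∈ ℝⁿ and r > 0, and assume f is γ-strongly convex on the closed ball B(x̄, r) for some γ > 0 (i.e., x ↦ f(x) − (γ/2)‖x‖² is convex on B(x̄, r)). Suppose f(x̄) ≤ min_{x ∈ B(x̄,r)} f(x) + ε for some ε with 0 ≤ ε < r²γ/8. Then: (1) f admits a unique global minimizer x* over ℝⁿ, and x* ∈ B(x̄, r) with ‖x* − x̄‖² ≤ (2/γ)·ε; (2) for every x ∈ ℝⁿ with ‖x − x̄‖² ≥ (8/γ)·ε, one has f(x) ≥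 min_{y ∈ ℝⁿ} f(y) + ε. -/
open Metric

set_option maxHeartbeats 1000000

lemma norm_combo_sq {E : Type*} [NormedAddCommGroup E] [InnerProductSpace ℝ E]
    (x y : E) (t : ℝ) :
    ‖t • x + (1 - t) • y‖ ^ 2
      = t * ‖x‖ ^ 2 + (1 - t) * ‖y‖ ^ 2 - t * (1 - t) * ‖x - y‖ ^ 2 := by
  rw [← real_inner_self_eq_norm_sq, ← real_inner_self_eq_norm_sq,
    ← real_inner_self_eq_norm_sq, ← real_inner_self_eq_norm_sq]
  simp only [inner_add_left, inner_add_right, inner_sub_left, inner_sub_right,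
    real_inner_smul_left, real_inner_smul_right, real_inner_comm x y]
  ring


/-- local strong convexity lemma. If `f` is convex on `ℝⁿ`, γ-strongly convex
on the closed ball `B(x̄, r)`, and `f(x̄) ≤ min_{B(x̄,r)} f + ε` with `0 ≤ ε < r²γ/8`, then
`f` has a unique global minimizer `x*`, which lies in `B(x̄, r)` and satisfies
`‖x* − x̄‖² ≤ (2/γ)ε`; moreover `‖x − x̄‖² ≥ (8/γ)ε` implies `f(x) ≥ min f + ε`. -/
theorem strong_convexity_localization {n : ℕ}
    (f : EuclideanSpace ℝ (Fin n) → ℝ)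
    (hconv : ConvexOn ℝ Set.univ f)
    (xbar : EuclideanSpace ℝ (Fin n)) (r γ ε : ℝ)
    (hr : 0 < r) (hγ : 0 < γ)
    (hstrong : ConvexOn ℝ (closedBall xbar r) (fun x => f x - (γ / 2) * ‖x‖ ^ 2))
    (hε : 0 ≤ ε) (hεlt : ε < r ^ 2 * γ / 8)
    (hmin : ∀ x ∈ closedBall xbar r, f xbar ≤ f x + ε) :
    ∃ xs : EuclideanSpace ℝ (Fin n),
      (∀ x, f xs ≤ f x) ∧
      (∀ x', (∀ x, f x' ≤ f x) → x' = xs) ∧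
      xs ∈ closedBall xbar r ∧
      ‖xs - xbar‖ ^ 2 ≤ (2 / γ) * ε ∧
      ∀ x, (8 / γ) * ε ≤ ‖x - xbar‖ ^ 2 → f xs + ε ≤ f x := by
  -- continuity of f
  have hcontf : Continuous f := by
    have := hconv.continuousOn_interior
    rw [interior_univ] at this
    exact continuousOn_univ.1 this
  -- minimizer on the ball
  obtain ⟨xs, hxsB, hxsmin⟩ := (isCompact_closedBall xbar r).exists_isMinOn
    ⟨xbar, mem_closedBall_self hr.le⟩ hcontf.continuousOn
  have hmin' : ∀ x ∈ closedBall xbar r, f xs ≤ f x := fun x hx => hxsmin hx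
  -- key quantitative lemma
  have key : ∀ x ∈ closedBall xbar r, f xs + γ / 2 * ‖x - xs‖ ^ 2 ≤ f x := by
    intro x hx
    by_cases hxe : x = xs
    · subst hxe; simp
    have hD : 0 < ‖x - xs‖ ^ 2 :=
      pow_pos (norm_pos_iff.2 (sub_ne_zero.2 hxe)) 2
    set D := ‖x - xs‖ ^ 2 with hDdef
    have := le_of_forall_pos_le_add (a := f xs + γ / 2 * D) (b := f x) ?_
    · exact this
    intro δ hδ
    set t := min (1/2 : ℝ) (δ / (γ / 2 * D)) with htdef
    have ht0 : 0 < t := lt_min (by norm_num) (div_pos hδ (mul_pos (by positivity) hD))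
    have ht1 : t ≤ 1/2 := min_le_left _ _
    have htδ : γ / 2 * t * D ≤ δ := by
      have h1 : t ≤ δ / (γ / 2 * D) := min_le_right _ _
      have h2 : 0 < γ / 2 * D := by positivity
      calc γ / 2 * t * D = t * (γ / 2 * D) := by ring
        _ ≤ (δ / (γ / 2 * D)) * (γ / 2 * D) := by
            exact mul_le_mul_of_nonneg_right h1 h2.le
        _ = δ := by field_simp
    set z := t • x + (1 - t) • xs with hzdef
    have hzB : z ∈ closedBall xbar r :=
      (convex_closedBall xbar r) hx hxsB ht0.le (by linarith) (by ring)
    have hS := hstrong.2 hx hxsB ht0.le (by linarith : (0:ℝ) ≤ 1 - t) (by ring)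
    simp only [smul_eq_mul] at hS
    rw [show t • x + (1 - t) • xs = z from rfl] at hS
    have hnc : ‖z‖ ^ 2 = t * ‖x‖ ^ 2 + (1 - t) * ‖xs‖ ^ 2 - t * (1 - t) * D := by
      rw [hzdef, norm_combo_sq]
    have hfz : f xs ≤ f z := hmin' z hzB
    -- hS : f z - γ/2 * ‖z‖^2 ≤ t * (f x - γ/2‖x‖^2) + (1-t) * (f xs - γ/2‖xs‖^2)
    have hkey : t * (f xs + γ / 2 * (1 - t) * D) ≤ t * f x := by nlinarith [hS, hfz, hnc]
    have h6 : f xs + γ / 2 * (1 - t) * D ≤ f x := le_of_mul_le_mul_left (by linarith [hkey]) ht0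
    nlinarith [h6, htδ]
  -- distance bound
  have hsub : γ / 2 * ‖xs - xbar‖ ^ 2 ≤ ε := by
    have h1 := key xbar (mem_closedBall_self hr.le)
    have h2 := hmin xs hxsB
    rw [norm_sub_rev] at h1
    linarith
  have hsq : ‖xs - xbar‖ ^ 2 ≤ (2 / γ) * ε := by
    rw [div_mul_eq_mul_div, le_div_iff₀ hγ]
    linarith
  have halt : ‖xs - xbar‖ < r / 2 := by
    have h2 : ‖xs - xbar‖ ^ 2 < (r / 2) ^ 2 := by
      have : (2 / γ) * ε < (r/2)^2 := by
        rw [div_mul_eq_mul_div, div_lt_iff₀ hγ]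
        nlinarith
      linarith
    exact lt_of_pow_lt_pow_left₀ 2 (by positivity) h2
  -- global minimality
  have hglobal : ∀ x, f xs ≤ f x := by
    intro x
    by_cases hxB : x ∈ closedBall xbar r
    · exact hmin' x hxB
    by_cases hxe : x = xs
    · subst hxe; exact le_rfl
    have hd : 0 < ‖x - xs‖ := norm_pos_iff.2 (sub_ne_zero.2 hxe)
    set t := min 1 ((r/2) / ‖x - xs‖) with htdef
    have ht0 : 0 < t := lt_min one_pos (div_pos (by positivity) hd)
    have ht1 : t ≤ 1 := min_le_left _ _
    have htd : t * ‖x - xs‖ ≤ r / 2 := by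
      have h1 : t ≤ (r/2) / ‖x - xs‖ := min_le_right _ _
      calc t * ‖x - xs‖ ≤ ((r/2) / ‖x - xs‖) * ‖x - xs‖ :=
            mul_le_mul_of_nonneg_right h1 hd.le
        _ = r / 2 := by field_simp
    set z := t • x + (1 - t) • xs with hzdef
    have hzxbar : z - xbar = t • (x - xs) + (xs - xbar) := by
      rw [hzdef]; module
    have hzB : z ∈ closedBall xbar r := by
      rw [mem_closedBall, dist_eq_norm, hzxbar]
      calc ‖t • (x - xs) + (xs - xbar)‖ ≤ ‖t • (x - xs)‖ + ‖xs - xbar‖ := norm_add_le _ _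
        _ ≤ r/2 + r/2 := by
            rw [norm_smul, Real.norm_eq_abs, abs_of_pos ht0]
            exact add_le_add htd halt.le
        _ = r := by ring
    have hC := hconv.2 (Set.mem_univ x) (Set.mem_univ xs) ht0.le
      (by linarith : (0:ℝ) ≤ 1 - t) (by ring)
    simp only [smul_eq_mul] at hC
    have hfz : f xs ≤ f z := hmin' z hzB
    have : t * f xs ≤ t * f x := by nlinarith [hC, hfz]
    exact le_of_mul_le_mul_left this ht0
  -- uniqueness
  have huniq : ∀ x', (∀ x, f x' ≤ f x) → x' = xs := by
    intro x' hx'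
    by_contra hne
    have heq : f x' = f xs := le_antisymm (hx' xs) (hglobal x')
    have hd : 0 < ‖x' - xs‖ := norm_pos_iff.2 (sub_ne_zero.2 hne)
    set t := min 1 ((r/2) / ‖x' - xs‖) with htdef
    have ht0 : 0 < t := lt_min one_pos (div_pos (by positivity) hd)
    have ht1 : t ≤ 1 := min_le_left _ _
    have htd : t * ‖x' - xs‖ ≤ r / 2 := by
      have h1 : t ≤ (r/2) / ‖x' - xs‖ := min_le_right _ _
      calc t * ‖x' - xs‖ ≤ ((r/2) / ‖x' - xs‖) * ‖x' - xs‖ :=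
            mul_le_mul_of_nonneg_right h1 hd.le
        _ = r / 2 := by field_simp
    set y := t • x' + (1 - t) • xs with hydef
    have hyxs : y - xs = t • (x' - xs) := by rw [hydef]; module
    have hyxbar : y - xbar = t • (x' - xs) + (xs - xbar) := by rw [hydef]; module
    have hyB : y ∈ closedBall xbar r := by
      rw [mem_closedBall, dist_eq_norm, hyxbar]
      calc ‖t • (x' - xs) + (xs - xbar)‖ ≤ ‖t • (x' - xs)‖ + ‖xs - xbar‖ := norm_add_le _ _
        _ ≤ r/2 + r/2 := by
            rw [norm_smul, Real.norm_eq_abs, abs_of_pos ht0]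
            exact add_le_add htd halt.le
        _ = r := by ring
    have hk := key y hyB
    have hny : ‖y - xs‖ = t * ‖x' - xs‖ := by
      rw [hyxs, norm_smul, Real.norm_eq_abs, abs_of_pos ht0]
    have hC := hconv.2 (Set.mem_univ x') (Set.mem_univ xs) ht0.le
      (by linarith : (0:ℝ) ≤ 1 - t) (by ring)
    simp only [smul_eq_mul] at hC
    -- f y ≤ t f x' + (1-t) f xs = f xs ; but f y ≥ f xs + γ/2 (t d)^2 > f xs
    have hpos : 0 < γ / 2 * ‖y - xs‖ ^ 2 := by
      rw [hny]; positivity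
    rw [heq] at hC
    nlinarith [hk, hC, hpos]
  -- growth bound
  have hgrow : ∀ x, (8 / γ) * ε ≤ ‖x - xbar‖ ^ 2 → f xs + ε ≤ f x := by
    intro x hx
    set b := Real.sqrt (2 * ε / γ) with hbdef
    have hb0 : 0 ≤ b := Real.sqrt_nonneg _
    have hb2 : b ^ 2 = 2 * ε / γ := Real.sq_sqrt (by positivity)
    have hab : ‖xs - xbar‖ ≤ b := by
      apply le_of_pow_le_pow_left₀ (two_ne_zero) hb0
      rw [hb2]
      calc ‖xs - xbar‖ ^ 2 ≤ (2/γ) * ε := hsq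
        _ = 2 * ε / γ := by ring
    have hxb : 2 * b ≤ ‖x - xbar‖ := by
      apply le_of_pow_le_pow_left₀ (two_ne_zero) (norm_nonneg _)
      calc (2*b)^2 = 4 * (2*ε/γ) := by rw [mul_pow]; rw [hb2]; ring
        _ = (8/γ) * ε := by ring
        _ ≤ ‖x - xbar‖^2 := hx
    have htri : ‖x - xbar‖ ≤ ‖x - xs‖ + ‖xs - xbar‖ := by
      have := norm_add_le (x - xs) (xs - xbar)
      simpa using this
    have hεb : γ / 2 * b ^ 2 = ε := by
      rw [hb2]; field_simp
    by_cases hxB : x ∈ closedBall xbar r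
    · have hk := key x hxB
      have hbx : b ≤ ‖x - xs‖ := by linarith
      have : b ^ 2 ≤ ‖x - xs‖ ^ 2 := pow_le_pow_left₀ hb0 hbx 2
      nlinarith [hk]
    · -- outside the ball
      have hxfar : r < ‖x - xbar‖ := by
        rw [mem_closedBall, dist_eq_norm, not_le] at hxB
        exact hxB
      set a := ‖xs - xbar‖ with hadef
      have hra : 0 < r - a := by linarith
      have hdlarge : r - a < ‖x - xs‖ := by linarith
      have hd : 0 < ‖x - xs‖ := by linarith
      set s := (r - a) / ‖x - xs‖ with hsdef
      have hs0 : 0 < s := by positivity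
      have hs1 : s < 1 := (div_lt_one hd).2 hdlarge
      have hsd : s * ‖x - xs‖ = r - a := div_mul_cancel₀ _ hd.ne'
      set z := s • x + (1 - s) • xs with hzdef
      have hzxs : z - xs = s • (x - xs) := by rw [hzdef]; module
      have hzxbar : z - xbar = s • (x - xs) + (xs - xbar) := by rw [hzdef]; module
      have hnz : ‖z - xs‖ = r - a := by
        rw [hzxs, norm_smul, Real.norm_eq_abs, abs_of_pos hs0, hsd]
      have hzB : z ∈ closedBall xbar r := by
        rw [mem_closedBall, dist_eq_norm, hzxbar]
        calc ‖s • (x - xs) + (xs - xbar)‖ ≤ ‖s • (x - xs)‖ + ‖xs - xbar‖ := norm_add_le _ _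
          _ ≤ (r - a) + a := by
              rw [norm_smul, Real.norm_eq_abs, abs_of_pos hs0, hsd]
          _ = r := by ring
      have hk := key z hzB
      rw [hnz] at hk
      have hra2 : r/2 < r - a := by linarith
      have hsq2 : (r/2)^2 ≤ (r-a)^2 := pow_le_pow_left₀ (by positivity) hra2.le 2
      have hbig : ε < γ / 2 * (r - a)^2 := by nlinarith
      have hC := hconv.2 (Set.mem_univ x) (Set.mem_univ xs) hs0.le
        (by linarith : (0:ℝ) ≤ 1 - s) (by ring)
      simp only [smul_eq_mul] at hC
      -- f z ≤ s f x + (1-s) f xs ; f z ≥ f xs + γ/2 (r-a)^2 > f xs + ε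
      have hgl := hglobal x
      nlinarith [hk, hC, hgl, hs1.le]
  exact ⟨xs, hglobal, huniq, hxsB, hsq, hgrow⟩
end
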